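/- Let d ≥ 0 and h : [0,d] → [0,1] be differentiable and convex, not identically 1, and let p : [0,d] → [0,1) be twice differentiable with p'' < 0 on (0,d) and p < 1. Then the function q(c) = (1 − h(c))/(1 − p(c)) is single-peaked on [0,d]: i.e., the derivative of the numerator expression N(c) = p'(c)(1 − h(c)) − h'(c)(1 − p(c)) is strictly negative on (0,d), so N is strictly decreasing, and q is increasing where N > 0 and decreasing where N < 0. -/

import Mathlib

/-- Single-peakedness of q(c) = (1-h(c))/(1-p(c)): the derivative of
N(c) = p'(c)(1-h(c)) - h'(c)(1-p(c)) is strictly negative on (0,d), so N is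
strictly decreasing, and q is increasing where N > 0 and decreasing where N < 0. -/
theorem stmt4 (d : ℝ) (hd : 0 ≤ d) (h p : ℝ → ℝ)
    (hhdiff : Differentiable ℝ h) (hhdiff2 : Differentiable ℝ (deriv h))
    (hhconv : ConvexOn ℝ (Set.Icc 0 d) h)
    (hhrange : ∀ c ∈ Set.Icc (0:ℝ) d, 0 ≤ h c ∧ h c ≤ 1)
    (hne : ∃ c ∈ Set.Icc (0:ℝ) d, h c ≠ 1)
    (hpdiff : Differentiable ℝ p) (hpdiff2 : Differentiable ℝ (deriv p))
    (hpconc : ∀ c ∈ Set.Ioo (0:ℝ) d, deriv (deriv p) c < 0)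
    (hprange : ∀ c ∈ Set.Icc (0:ℝ) d, 0 ≤ p c ∧ p c < 1) :
    (∀ c ∈ Set.Ioo (0:ℝ) d,
      deriv (fun t => deriv p t * (1 - h t) - deriv h t * (1 - p t)) c < 0) ∧
    StrictAntiOn (fun t => deriv p t * (1 - h t) - deriv h t * (1 - p t))
      (Set.Ioo (0:ℝ) d) ∧
    (∀ c ∈ Set.Ioo (0:ℝ) d,
      (0 < deriv p c * (1 - h c) - deriv h c * (1 - p c) →
        0 < deriv (fun t => (1 - h t) / (1 - p t)) c) ∧
      (deriv p c * (1 - h c) - deriv h c * (1 - p c) < 0 →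
        deriv (fun t => (1 - h t) / (1 - p t)) c < 0)) := by
  -- deriv h is monotone on Icc
  have hmono : MonotoneOn (deriv h) (Set.Icc 0 d) :=
    hhconv.monotoneOn_deriv (fun x _ => hhdiff x)
  -- second derivative of h is nonneg on Ioo
  have hh2nonneg : ∀ c ∈ Set.Ioo (0:ℝ) d, 0 ≤ deriv (deriv h) c := by
    intro c hc
    have hder : HasDerivAt (deriv h) (deriv (deriv h) c) c := (hhdiff2 c).hasDerivAt
    have htend : Filter.Tendsto (slope (deriv h) c) (nhdsWithin c (Set.Ioi c))
        (nhds (deriv (deriv h) c)) := by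
      refine (hasDerivAt_iff_tendsto_slope.mp hder).mono_left (nhdsWithin_mono c ?_)
      intro x hx
      exact Set.mem_compl_singleton_iff.mpr (ne_of_gt hx)
    refine ge_of_tendsto htend ?_
    filter_upwards [Ioc_mem_nhdsGT_of_mem ⟨le_refl c, hc.2⟩] with x hx
    have hxIcc : x ∈ Set.Icc (0:ℝ) d := ⟨le_of_lt (lt_trans hc.1 hx.1), hx.2⟩
    have hcIcc : c ∈ Set.Icc (0:ℝ) d := ⟨le_of_lt hc.1, le_of_lt hc.2⟩
    have hle : deriv h c ≤ deriv h x := hmono hcIcc hxIcc (le_of_lt hx.1)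
    have : (0:ℝ) < x - c := by linarith [hx.1]
    rw [slope_def_field]
    exact div_nonneg (by linarith) (le_of_lt this)
  -- h < 1 on Ioo
  have hlt1 : ∀ c ∈ Set.Ioo (0:ℝ) d, h c < 1 := by
    intro c hc
    have hcIcc : c ∈ Set.Icc (0:ℝ) d := ⟨le_of_lt hc.1, le_of_lt hc.2⟩
    rcases lt_or_eq_of_le (hhrange c hcIcc).2 with hlt | heq
    · exact hlt
    exfalso
    obtain ⟨c0, hc0, hne1⟩ := hne
    have hc0lt : h c0 < 1 := lt_of_le_of_ne (hhrange c0 hc0).2 hne1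
    rcases lt_or_ge c0 c with hcc | hcc
    · -- c between c0 and d
      set t : ℝ := (d - c) / (d - c0) with ht
      have hdc0 : (0:ℝ) < d - c0 := by linarith [hc0.2, hc.2, hcc]
      have ht0 : 0 < t := div_pos (by linarith [hc.2]) hdc0
      have ht1 : t < 1 := by
        rw [div_lt_one hdc0]; linarith
      have hcomb : t • c0 + (1 - t) • d = c := by
        simp only [smul_eq_mul]
        have e : t * (d - c0) = d - c := div_mul_cancel₀ _ hdc0.ne'
        linear_combination -e
      have := hhconv.2 hc0 (Set.right_mem_Icc.mpr hd) (le_of_lt ht0)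
        (by linarith : (0:ℝ) ≤ 1 - t) (by ring)
      rw [hcomb] at this
      have hhd : h d ≤ 1 := (hhrange d (Set.right_mem_Icc.mpr hd)).2
      have : h c < t * 1 + (1 - t) * 1 := by
        calc h c ≤ t • h c0 + (1 - t) • h d := this
        _ = t * h c0 + (1 - t) * h d := by simp [smul_eq_mul]
        _ < t * 1 + (1 - t) * 1 := by
            apply add_lt_add_of_lt_of_le
            · exact (mul_lt_mul_iff_right₀ ht0).mpr hc0lt
            · exact mul_le_mul_of_nonneg_left hhd (by linarith)
      simp at this; linarith
    · -- c between 0 and c0, c < c0 since h c = 1 ≠ h c0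
      have hcc' : c < c0 := lt_of_le_of_ne hcc (by intro e; rw [e] at heq; exact hne1 heq)
      set t : ℝ := (c0 - c) / c0 with ht
      have hc0pos : (0:ℝ) < c0 := lt_trans hc.1 hcc'
      have ht0 : 0 < t := div_pos (by linarith) hc0pos
      have ht1 : t < 1 := by rw [div_lt_one hc0pos]; linarith [hc.1]
      have hcomb : t • (0:ℝ) + (1 - t) • c0 = c := by
        simp only [smul_eq_mul]
        have e : t * c0 = c0 - c := div_mul_cancel₀ _ hc0pos.ne'
        linear_combination -e
      have := hhconv.2 (Set.left_mem_Icc.mpr hd) hc0 (le_of_lt ht0)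
        (by linarith : (0:ℝ) ≤ 1 - t) (by ring)
      rw [hcomb] at this
      have hh0 : h 0 ≤ 1 := (hhrange 0 (Set.left_mem_Icc.mpr hd)).2
      have : h c < t * 1 + (1 - t) * 1 := by
        calc h c ≤ t • h 0 + (1 - t) • h c0 := this
        _ = t * h 0 + (1 - t) * h c0 := by simp [smul_eq_mul]
        _ < t * 1 + (1 - t) * 1 := by
            apply add_lt_add_of_le_of_lt
            · exact mul_le_mul_of_nonneg_left hh0 (le_of_lt ht0)
            · exact (mul_lt_mul_iff_right₀ (by linarith)).mpr hc0lt
      simp at this; linarith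
  -- formula for deriv N
  have hNderiv : ∀ c : ℝ, deriv (fun t => deriv p t * (1 - h t) - deriv h t * (1 - p t)) c
      = deriv (deriv p) c * (1 - h c) - deriv (deriv h) c * (1 - p c) := by
    intro c
    have h1 : HasDerivAt (fun t => deriv p t * (1 - h t))
        (deriv (deriv p) c * (1 - h c) + deriv p c * (-(deriv h c))) c :=
      (hpdiff2 c).hasDerivAt.mul (((hhdiff c).hasDerivAt).const_sub 1)
    have h2 : HasDerivAt (fun t => deriv h t * (1 - p t))
        (deriv (deriv h) c * (1 - p c) + deriv h c * (-(deriv p c))) c :=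
      (hhdiff2 c).hasDerivAt.mul (((hpdiff c).hasDerivAt).const_sub 1)
    have := (h1.sub h2).deriv
    exact this.trans (by ring)
  have part1 : ∀ c ∈ Set.Ioo (0:ℝ) d,
      deriv (fun t => deriv p t * (1 - h t) - deriv h t * (1 - p t)) c < 0 := by
    intro c hc
    rw [hNderiv c]
    have h1 : deriv (deriv p) c < 0 := hpconc c hc
    have h2 : 0 < 1 - h c := by linarith [hlt1 c hc]
    have h3 : 0 ≤ deriv (deriv h) c := hh2nonneg c hc
    have h4 : 0 < 1 - p c := by
      have := (hprange c ⟨le_of_lt hc.1, le_of_lt hc.2⟩).2; linarith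
    nlinarith
  refine ⟨part1, ?_, ?_⟩
  · -- Strict anti
    have hNd : Differentiable ℝ (fun t => deriv p t * (1 - h t) - deriv h t * (1 - p t)) :=
      (hpdiff2.mul ((differentiable_const 1).sub hhdiff)).sub
        (hhdiff2.mul ((differentiable_const 1).sub hpdiff))
    refine strictAntiOn_of_deriv_neg (convex_Ioo 0 d) hNd.continuous.continuousOn ?_
    simpa [interior_Ioo] using part1
  · intro c hc
    have hcIcc : c ∈ Set.Icc (0:ℝ) d := ⟨le_of_lt hc.1, le_of_lt hc.2⟩
    have hp1 : 0 < 1 - p c := by linarith [(hprange c hcIcc).2]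
    have hpne : (1 - p c) ≠ 0 := ne_of_gt hp1
    have hq : HasDerivAt (fun t => (1 - h t) / (1 - p t))
        (((-(deriv h c)) * (1 - p c) - (1 - h c) * (-(deriv p c))) / (1 - p c) ^ 2) c :=
      (((hhdiff c).hasDerivAt).const_sub 1).div (((hpdiff c).hasDerivAt).const_sub 1) hpne
    have hqd : deriv (fun t => (1 - h t) / (1 - p t)) c
        = (deriv p c * (1 - h c) - deriv h c * (1 - p c)) / (1 - p c) ^ 2 := by
      rw [hq.deriv]; ring_nf
    rw [hqd]
    have hsq : 0 < (1 - p c) ^ 2 := by positivity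
    exact ⟨fun hN => div_pos hN hsq, fun hN => div_neg_of_neg_of_pos hN hsq⟩
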